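/- Let G be a locally compact compactly generated group with Property (CF), let π be a continuous isometric representation of G on a Banach space E, and let b ∈ Z¹(G,π) be a sublinear 1-cocycle, i.e. ‖b(g)‖ = o(|g|_S). Then b lies in the closure of the space of coboundaries B¹(G,π) in the topology of uniform convergence on compact sets; equivalently, the affine action σ(g)v = π(g)v + b(g) admits a sequence of almost fixed points. -/

import Mathlib

open MeasureTheory Filter Set Pointwise symmDiff

set_option maxHeartbeats 1000000

noncomputable def wordLength {G : Type*} [Group G] (S : Set G) (g : G) : ℕ :=
  sInf {n : ℕ | g ∈ S ^ n}

/-- Let `G` be a locally compact compactly generated group with Property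
(CF), `π` a continuous isometric representation of `G` on a Banach space `E`, and
`b ∈ Z¹(G, π)` a sublinear `1`-cocycle (`‖b(g)‖ = o(|g|_S)`).  Then `b` lies in the closure
of the coboundaries: equivalently, the affine action `σ(g)v = π(g)v + b(g)` admits a
sequence of almost fixed points. -/
theorem stmt3 {G : Type*} [Group G] [TopologicalSpace G] [IsTopologicalGroup G]
    [LocallyCompactSpace G] [MeasurableSpace G] [BorelSpace G]
    (μ : Measure G) [μ.IsMulLeftInvariant] [μ.IsHaarMeasure]
    (S : Set G) (hScomp : IsCompact S) (hSsym : S⁻¹ = S) (hSgen : ∀ g : G, ∃ n : ℕ, g ∈ S ^ n)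
    -- Property (CF)
    (F : ℕ → Set G) (C : ℝ)
    (hCF : ∀ n : ℕ, 1 ≤ n → IsCompact (F n) ∧ 0 < μ (F n) ∧ F n ⊆ S ^ n ∧
      ∀ s ∈ S, μ ((s • F n) ∆ F n) ≤ ENNReal.ofReal (C / n) * μ (F n))
    -- a continuous isometric representation on a Banach space `E`
    {E : Type*} [NormedAddCommGroup E] [NormedSpace ℝ E] [CompleteSpace E]
    (π : G →* (E →L[ℝ] E)) (hπiso : ∀ (g : G) (v : E), ‖π g v‖ = ‖v‖)
    (hπcont : Continuous fun q : G × E => π q.1 q.2)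
    -- a sublinear 1-cocycle
    (b : G → E) (hbcont : Continuous b)
    (hbcocycle : ∀ g h : G, b (g * h) = π g (b h) + b g)
    (hsublin : ∀ ε : ℝ, 0 < ε → ∃ N : ℕ, ∀ g : G, N ≤ wordLength S g →
      ‖b g‖ ≤ ε * (wordLength S g : ℝ)) :
    ∃ v : ℕ → E, ∀ ε : ℝ, 0 < ε → ∃ N : ℕ, ∀ n : ℕ, N ≤ n →
      ∀ s ∈ S, ‖π s (v n) + b s - v n‖ ≤ ε := by
  classical
  have hpow : ∀ n : ℕ, IsCompact (S ^ n) := by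
    intro n
    induction n with
    | zero => simpa only [pow_zero, Set.singleton_one] using (isCompact_singleton : IsCompact ({1} : Set G))
    | succ n ih => rw [pow_succ]; exact ih.mul hScomp
  set C' : ℝ := max C 0 with hC'def
  have hC'0 : 0 ≤ C' := le_max_right _ _
  set T : ℕ → Set G := fun n => toMeasurable μ (F n) ∩ closure (S ^ n) with hTdef
  set v : ℕ → E := fun n => (μ (F n)).toReal⁻¹ • ∫ g in T n, b g ∂μ with hvdef
  have hIntOn : ∀ X k : Set G, MeasurableSet X → IsCompact k → X ⊆ k → μ X ≠ ⊤ →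
      IntegrableOn b X μ := by
    intro X k hXm hk hXk hXfin
    obtain ⟨Mk, hMk⟩ := hk.exists_bound_of_continuousOn hbcont.continuousOn
    refine ⟨?_, HasFiniteIntegral.restrict_of_bounded (C := Mk) hXfin.lt_top ?_⟩
    · borelize E
      rw [aestronglyMeasurable_iff_aemeasurable_separable]
      exact ⟨hbcont.measurable.aemeasurable, b '' k, (hk.image hbcont).isSeparable,
        Filter.mem_of_superset (self_mem_ae_restrict hXm) fun x hx => ⟨x, hXk hx, rfl⟩⟩
    · exact (ae_restrict_mem hXm).mono fun x hx => hMk x (hXk hx)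
  -- key estimate
  have key : ∀ n : ℕ, 1 ≤ n → ∀ s ∈ S, ∀ M : ℝ, 0 ≤ M →
      (∀ g ∈ S ^ n, ‖b g‖ ≤ M) → (∀ g ∈ S ^ (n + 1), ‖b g‖ ≤ M) →
      ‖π s (v n) + b s - v n‖ ≤ 2 * (C' / (n : ℝ)) * M := by
    intro n hn s hs M hM0 hMn hMn1
    obtain ⟨hFc, hFpos, hFS, hΔ⟩ := hCF n hn
    have hn0 : (0 : ℝ) < n := by exact_mod_cast hn
    have hμF_top : μ (F n) ≠ ⊤ := hFc.measure_lt_top.ne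
    set c : ℝ := (μ (F n)).toReal with hcdef
    have hc0 : 0 < c := ENNReal.toReal_pos hFpos.ne' hμF_top
    have hclosn : ∀ g ∈ closure (S ^ n), ‖b g‖ ≤ M := fun g hg =>
      closure_minimal hMn (isClosed_le hbcont.norm continuous_const) hg
    have hclosn1 : ∀ g ∈ closure (S ^ (n + 1)), ‖b g‖ ≤ M := fun g hg =>
      closure_minimal hMn1 (isClosed_le hbcont.norm continuous_const) hg
    have hKn : IsCompact (closure (S ^ n)) := (hpow n).closure
    have hTm : MeasurableSet (T n) :=
      (measurableSet_toMeasurable μ (F n)).inter isClosed_closure.measurableSet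
    have hFT : F n ⊆ T n :=
      subset_inter (subset_toMeasurable μ (F n)) (hFS.trans subset_closure)
    have hTcl : T n ⊆ closure (S ^ n) := inter_subset_right
    have hrT : μ.restrict (T n) = μ.restrict (F n) := by
      refine le_antisymm ?_ (Measure.restrict_mono hFT le_rfl)
      calc μ.restrict (T n) ≤ μ.restrict (toMeasurable μ (F n)) :=
            Measure.restrict_mono inter_subset_left le_rfl
        _ = μ.restrict (F n) := Measure.restrict_toMeasurable hμF_top
    have hμT : μ (T n) = μ (F n) := by
      rw [← Measure.restrict_apply_univ, hrT, Measure.restrict_apply_univ]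
    set A : Set G := s • T n with hAdef
    have hAm : MeasurableSet A := hTm.const_smul s
    have hsS : s • (S ^ n) ⊆ S ^ (n + 1) := by
      rintro x ⟨y, hy, rfl⟩
      rw [pow_succ']
      exact Set.mul_mem_mul hs hy
    have hAcl : A ⊆ closure (S ^ (n + 1)) :=
      calc A ⊆ s • closure (S ^ n) := smul_set_mono hTcl
        _ = closure (s • S ^ n) := (closure_smul s _).symm
        _ ⊆ closure (S ^ (n + 1)) := closure_mono hsS
    have hΔ' : μ ((s • F n) ∆ F n) ≤ ENNReal.ofReal (C' / n) * μ (F n) := by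
      refine (hΔ s hs).trans (mul_le_mul_left (ENNReal.ofReal_le_ofReal ?_) _)
      gcongr
      exact le_max_left C 0
    have hrA : μ.restrict A = μ.restrict (s • F n) := by
      ext t ht
      rw [Measure.restrict_apply ht, Measure.restrict_apply ht]
      have htm : MeasurableSet (s⁻¹ • t) := ht.const_smul s⁻¹
      have e1 : s • (s⁻¹ • t ∩ T n) = t ∩ A := by
        rw [hAdef, smul_set_inter, smul_inv_smul]
      have e2 : s • (s⁻¹ • t ∩ F n) = t ∩ s • F n := by
        rw [smul_set_inter, smul_inv_smul]
      rw [← e1, ← e2, measure_smul μ, measure_smul μ]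
      calc μ (s⁻¹ • t ∩ T n) = μ.restrict (T n) (s⁻¹ • t) := (Measure.restrict_apply htm).symm
        _ = μ.restrict (F n) (s⁻¹ • t) := by rw [hrT]
        _ = μ (s⁻¹ • t ∩ F n) := Measure.restrict_apply htm
    have hμA : μ A = μ (F n) := by rw [hAdef, measure_smul μ, hμT]
    have hdiffA : μ (A \ T n) ≤ ENNReal.ofReal (C' / n) * μ (F n) := by
      have h1 : μ (A \ T n) = μ ((s • F n) \ T n) := by
        rw [diff_eq, inter_comm, ← Measure.restrict_apply hTm.compl, hrA,
          Measure.restrict_apply hTm.compl, inter_comm, ← diff_eq]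
      rw [h1]
      refine le_trans (measure_mono ?_) hΔ'
      refine (diff_subset_diff_right hFT).trans ?_
      rw [Set.symmDiff_def]
      exact subset_union_left
    have hdiffT : μ (T n \ A) ≤ ENNReal.ofReal (C' / n) * μ (F n) := by
      have h1 : μ (T n \ A) = μ (F n \ A) := by
        rw [diff_eq, inter_comm, ← Measure.restrict_apply hAm.compl, hrT,
          Measure.restrict_apply hAm.compl, inter_comm, ← diff_eq]
      rw [h1]
      refine le_trans (measure_mono ?_) hΔ'
      refine (diff_subset_diff_right (smul_set_mono hFT)).trans ?_
      rw [Set.symmDiff_def]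
      exact subset_union_right
    have hRHS_top : ENNReal.ofReal (C' / n) * μ (F n) ≠ ⊤ :=
      ENNReal.mul_ne_top ENNReal.ofReal_ne_top hμF_top
    have hRHS_toReal : (ENNReal.ofReal (C' / n) * μ (F n)).toReal = C' / n * c := by
      rw [ENNReal.toReal_mul, ENNReal.toReal_ofReal (by positivity)]
    have htoA : (μ (A \ T n)).toReal ≤ C' / n * c := by
      rw [← hRHS_toReal]; exact ENNReal.toReal_mono hRHS_top hdiffA
    have htoT : (μ (T n \ A)).toReal ≤ C' / n * c := by
      rw [← hRHS_toReal]; exact ENNReal.toReal_mono hRHS_top hdiffT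
    have hμTlt : μ (T n) ≠ ⊤ := by rw [hμT]; exact hμF_top
    have hμAlt : μ A ≠ ⊤ := by rw [hμA]; exact hμF_top
    have hIntT : IntegrableOn b (T n) μ := hIntOn (T n) _ hTm hKn hTcl hμTlt
    have hIntA : IntegrableOn b A μ :=
      hIntOn A _ hAm (hpow (n + 1)).closure hAcl hμAlt
    -- the identity
    have hid : π s (v n) + b s - v n
        = c⁻¹ • ((∫ g in A, b g ∂μ) - ∫ g in T n, b g ∂μ) := by
      have h1 : π s (v n) = c⁻¹ • ∫ g in T n, (π s) (b g) ∂μ := by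
        rw [hvdef]
        simp only []
        rw [_root_.map_smul, (π s).integral_comp_comm hIntT]
      have h2 : b s = c⁻¹ • ∫ _ in T n, b s ∂μ := by
        rw [setIntegral_const, measureReal_def, hμT, ← hcdef, smul_smul, inv_mul_cancel₀ hc0.ne', one_smul]
      have h3 : (∫ g in T n, (π s) (b g) ∂μ) + (∫ _ in T n, b s ∂μ)
          = ∫ g in T n, b (s * g) ∂μ := by
        rw [← integral_add ((π s).integrable_comp hIntT)
          (integrableOn_const hμTlt)]
        simp_rw [← hbcocycle s]
      have h4 : (∫ g in T n, b (s * g) ∂μ) = ∫ g in A, b g ∂μ := by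
        have h := (measurePreserving_mul_left μ s).setIntegral_image_emb
          (MeasurableEquiv.mulLeft s).measurableEmbedding b (T n)
        have himg : (fun x => s * x) '' T n = A := by
          rw [hAdef]
          ext x
          constructor
          · rintro ⟨y, hy, rfl⟩
            exact smul_mem_smul_set hy
          · rintro ⟨y, hy, rfl⟩
            exact ⟨y, hy, rfl⟩
        rw [← h, himg]
      calc π s (v n) + b s - v n
          = (c⁻¹ • ∫ g in T n, (π s) (b g) ∂μ) + (c⁻¹ • ∫ _ in T n, b s ∂μ)
            - c⁻¹ • ∫ g in T n, b g ∂μ := by rw [← h1, ← h2]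
        _ = c⁻¹ • ((∫ g in T n, (π s) (b g) ∂μ) + (∫ _ in T n, b s ∂μ))
            - c⁻¹ • ∫ g in T n, b g ∂μ := by rw [smul_add]
        _ = c⁻¹ • ((∫ g in A, b g ∂μ) - ∫ g in T n, b g ∂μ) := by
            rw [h3, h4, ← smul_sub]
    -- splitting
    have hsplit : (∫ g in A, b g ∂μ) - (∫ g in T n, b g ∂μ)
        = (∫ g in A \ T n, b g ∂μ) - ∫ g in T n \ A, b g ∂μ := by
      rw [← integral_inter_add_diff hTm hIntA, ← integral_inter_add_diff hAm hIntT,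
        inter_comm]
      abel
    have hnormA : ‖∫ g in A \ T n, b g ∂μ‖ ≤ M * (μ (A \ T n)).toReal :=
      norm_setIntegral_le_of_norm_le_const
        (lt_of_le_of_lt (measure_mono diff_subset) hμAlt.lt_top)
        (fun x hx => hclosn1 x (hAcl hx.1))
    have hnormT : ‖∫ g in T n \ A, b g ∂μ‖ ≤ M * (μ (T n \ A)).toReal :=
      norm_setIntegral_le_of_norm_le_const
        (lt_of_le_of_lt (measure_mono diff_subset) hμTlt.lt_top)
        (fun x hx => hclosn x (hTcl hx.1))
    calc ‖π s (v n) + b s - v n‖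
        = c⁻¹ * ‖(∫ g in A, b g ∂μ) - ∫ g in T n, b g ∂μ‖ := by
          rw [hid, norm_smul, Real.norm_eq_abs, abs_of_pos (inv_pos.2 hc0)]
      _ ≤ c⁻¹ * (M * (C' / n * c) + M * (C' / n * c)) := by
          refine mul_le_mul_of_nonneg_left ?_ (inv_nonneg.2 hc0.le)
          rw [hsplit]
          refine (norm_sub_le _ _).trans (add_le_add (hnormA.trans ?_) (hnormT.trans ?_))
          · exact mul_le_mul_of_nonneg_left htoA hM0
          · exact mul_le_mul_of_nonneg_left htoT hM0
      _ = 2 * (C' / (n : ℝ)) * M := by field_simp; ring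
  -- assembly
  refine ⟨v, fun ε hε => ?_⟩
  have hC'1 : (0 : ℝ) < C' + 1 := by positivity
  set ε' : ℝ := ε / (8 * (C' + 1)) with hε'def
  have hε' : 0 < ε' := by positivity
  obtain ⟨N₀, hN₀⟩ := hsublin ε' hε'
  have hKfin : IsCompact (⋃ m ∈ Finset.range N₀, S ^ m) :=
    (Finset.range N₀).finite_toSet.isCompact_biUnion fun m _ => hpow m
  obtain ⟨M₀, hM₀⟩ := hKfin.exists_bound_of_continuousOn hbcont.continuousOn
  set M₁ : ℝ := max M₀ 0 with hM₁def
  have hM₁0 : 0 ≤ M₁ := le_max_right _ _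
  have hbound : ∀ n : ℕ, ∀ g ∈ S ^ n, ‖b g‖ ≤ M₁ + ε' * (n : ℝ) := by
    intro n g hg
    have hwl : wordLength S g ≤ n := Nat.sInf_le hg
    have hε'n : 0 ≤ ε' * (n : ℝ) := by positivity
    by_cases hN : N₀ ≤ wordLength S g
    · have h1 := hN₀ g hN
      have h2 : ε' * (wordLength S g : ℝ) ≤ ε' * (n : ℝ) := by
        gcongr
      linarith [hM₁0]
    · push_neg at hN
      have hmem : g ∈ ⋃ m ∈ Finset.range N₀, S ^ m :=
        Set.mem_biUnion (Finset.mem_range.mpr hN) (Nat.sInf_mem (hSgen g))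
      have := hM₀ g hmem
      have hM : M₀ ≤ M₁ := le_max_left _ _
      linarith
  obtain ⟨N₁, hN₁⟩ := exists_nat_gt (4 * C' * M₁ / ε)
  refine ⟨max N₁ 1, fun n hn s hs => ?_⟩
  have hn1 : 1 ≤ n := le_trans (le_max_right _ _) hn
  have hnN₁ : N₁ ≤ n := le_trans (le_max_left _ _) hn
  have hn0 : (0 : ℝ) < n := by exact_mod_cast hn1
  have hn1' : (1 : ℝ) ≤ n := by exact_mod_cast hn1
  have hkey := key n hn1 s hs (M₁ + ε' * ((n : ℝ) + 1)) (by positivity)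
    (fun g hg => by
      have := hbound n g hg
      have : ε' * (n : ℝ) ≤ ε' * ((n : ℝ) + 1) := by nlinarith [hε'.le]
      linarith [hbound n g hg])
    (fun g hg => by
      have := hbound (n + 1) g hg
      push_cast at this
      linarith)
  refine hkey.trans ?_
  -- numeric estimate
  have hNn : 4 * C' * M₁ < ε * n := by
    have h1 : 4 * C' * M₁ / ε < (n : ℝ) := lt_of_lt_of_le hN₁ (by exact_mod_cast hnN₁)
    have := (div_lt_iff₀ hε).mp h1
    linarith
  have h4 : 4 * C' * ε' ≤ ε / 2 := by
    have h8 : (0 : ℝ) < 8 * (C' + 1) := by positivity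
    have heq : ε' * (8 * (C' + 1)) = ε := div_mul_cancel₀ ε h8.ne'
    nlinarith [hε'.le, hC'0]
  have hrw : 2 * (C' / (n : ℝ)) * (M₁ + ε' * ((n : ℝ) + 1))
      = 2 * C' * (M₁ + ε' * ((n : ℝ) + 1)) / n := by ring
  rw [hrw, div_le_iff₀ hn0]
  have e1 : 2 * C' * ε' * ((n : ℝ) + 1) ≤ 4 * C' * ε' * n := by
    nlinarith [mul_nonneg (mul_nonneg hC'0 hε'.le) (sub_nonneg.mpr hn1')]
  have e2 : 4 * C' * ε' * n ≤ (ε / 2) * n := mul_le_mul_of_nonneg_right h4 hn0.le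
  have e3 : 2 * C' * M₁ ≤ (ε / 2) * n := by linarith
  linarith [e1, e2, e3]
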